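/- arXiv:2507.13566 — 8 statements merged into one kernel-verified Lean document; each statement's English description precedes it below -/
import Mathlib

section
/- Let ν2(n) denote the number of partitions of n into exactly two part sizes. Then ν2(4n+2) ≡ 0 (mod 2) for all n ≥ 0. -/
/-- `ν₂ n` counts the partitions of `n` into exactly two part sizes, i.e. quadruples
`(λ1, m1, λ2, m2)` with `λ1 > λ2 ≥ 1`, `m1, m2 ≥ 1`, `λ1 m1 + λ2 m2 = n`. -/
noncomputable def nu2 (n : ℕ) : ℕ :=
  Set.ncard {q : ℕ × ℕ × ℕ × ℕ |
    q.2.2.1 < q.1 ∧ 1 ≤ q.2.2.1 ∧ 1 ≤ q.2.1 ∧ 1 ≤ q.2.2.2 ∧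
    q.1 * q.2.1 + q.2.2.1 * q.2.2.2 = n}

theorem nu2_four_n_add_two_even (n : ℕ) : nu2 (4 * n + 2) % 2 = 0 := by
  classical
  set N := 4 * n + 2 with hN
  set S : Set (ℕ × ℕ × ℕ × ℕ) := {q : ℕ × ℕ × ℕ × ℕ |
    q.2.2.1 < q.1 ∧ 1 ≤ q.2.2.1 ∧ 1 ≤ q.2.1 ∧ 1 ≤ q.2.2.2 ∧
    q.1 * q.2.1 + q.2.2.1 * q.2.2.2 = N} with hS
  have hfin : S.Finite := by
    apply Set.Finite.subset (Set.finite_Icc ((0:ℕ),(0:ℕ),(0:ℕ),(0:ℕ)) (N,N,N,N))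
    rintro ⟨a, m, b, k⟩ ⟨h1, h2, h3, h4, h5⟩
    dsimp only at h1 h2 h3 h4 h5
    have ha : a ≤ a * m := Nat.le_mul_of_pos_right a h3
    have hm : m ≤ a * m := Nat.le_mul_of_pos_left m (h2.trans h1.le)
    have hb : b ≤ b * k := Nat.le_mul_of_pos_right b h4
    have hk : k ≤ b * k := Nat.le_mul_of_pos_left k h2
    simp only [Set.mem_Icc, Prod.le_def]
    omega
  have hmap : ∀ q ∈ S, ((q.2.1 + q.2.2.2, q.2.2.1, q.2.1, q.1 - q.2.2.1) : ℕ × ℕ × ℕ × ℕ) ∈ S := by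
    rintro ⟨a, m, b, k⟩ ⟨h1, h2, h3, h4, h5⟩
    dsimp only at h1 h2 h3 h4 h5 ⊢
    obtain ⟨c, rfl⟩ : ∃ c, a = b + c := ⟨a - b, by omega⟩
    refine ⟨?_, ?_, ?_, ?_, ?_⟩ <;> dsimp only
    · omega
    · exact h3
    · exact h2
    · omega
    have hbc : b + c - b = c := by omega
    rw [hbc]
    ring_nf
    ring_nf at h5
    linarith
  haveI : Fintype S := hfin.fintype
  let g : S → S := fun x =>
    ⟨(x.1.2.1 + x.1.2.2.2, x.1.2.2.1, x.1.2.1, x.1.1 - x.1.2.2.1), hmap _ x.2⟩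
  have hginv : Function.Involutive g := by
    rintro ⟨⟨a, m, b, k⟩, h1, h2, h3, h4, h5⟩
    dsimp only at h1 h2 h3 h4 h5
    apply Subtype.ext
    simp only [g]
    have : b + (a - b) = a := by omega
    have : m + k - m = k := by omega
    simp_all
  have hfix : ∀ x : S, g x ≠ x := by
    rintro ⟨⟨a, m, b, k⟩, h1, h2, h3, h4, h5⟩ heq
    dsimp only at h1 h2 h3 h4 h5
    have heq' : ((m + k, b, m, a - b) : ℕ × ℕ × ℕ × ℕ) = (a, m, b, k) :=
      congrArg Subtype.val heq
    have e1 : m + k = a := congrArg Prod.fst heq'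
    have e2 : b = m := congrArg (fun q => q.2.1) heq'
    subst e2
    have h5' : N = (b + k) * b + b * k := by rw [← h5, ← e1]
    rcases Nat.even_or_odd b with ⟨t, rfl⟩ | ⟨t, rfl⟩
    · have : N = 4 * (t * t) + 4 * (t * k) := by rw [h5']; ring
      obtain ⟨u, hu⟩ : ∃ u, t * t = u := ⟨_, rfl⟩
      obtain ⟨v, hv⟩ : ∃ v, t * k = v := ⟨_, rfl⟩
      rw [hu, hv] at this
      omega
    · have : N = 4 * (t * t) + 4 * t + 1 + 4 * (t * k) + 2 * k := by rw [h5']; ring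
      obtain ⟨u, hu⟩ : ∃ u, t * t = u := ⟨_, rfl⟩
      obtain ⟨v, hv⟩ : ∃ v, t * k = v := ⟨_, rfl⟩
      rw [hu, hv] at this
      omega
  have hdvd : 2 ∣ Fintype.card S := by
    have h2 : (hginv.toPerm g) ^ 2 = 1 := by
      rw [sq]
      exact Equiv.ext fun x => hginv x
    have hsupp : (hginv.toPerm g).support = Finset.univ := by
      ext x
      simpa [Equiv.Perm.mem_support] using hfix x
    have := Equiv.Perm.two_dvd_card_support h2
    rwa [hsupp, Finset.card_univ] at this
  have hcard : nu2 N = Fintype.card S := by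
    rw [nu2, ← Nat.card_coe_set_eq, Nat.card_eq_fintype_card]
  omega
end

section
/- For a positive integer m, write m = 2^{b(m)} ℓ(m) with ℓ(m) odd. If λ1 m1 + λ2 m2 = n with n ≡ 14 (mod 16) and λ1, m1, λ2, m2 positive integers, then ℓ(λ1) ≢ ℓ(m1) (mod 8) or ℓ(λ2) ≢ ℓ(m2) (mod 8). -/
lemma prod_mod16_aux (a b : ℕ) (ha : 0 < a) (hb : 0 < b)
    (h : (ordCompl[2] a) % 8 = (ordCompl[2] b) % 8) :
    (a * b) % 16 = 0 ∨ (a * b) % 16 = 1 ∨ (a * b) % 16 = 2 ∨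
    (a * b) % 16 = 4 ∨ (a * b) % 16 = 8 ∨ (a * b) % 16 = 9 := by
  set u := ordCompl[2] a with hu
  set v := ordCompl[2] b with hv
  have hua : 2 ^ (a.factorization 2) * u = a := Nat.ordProj_mul_ordCompl_eq_self a 2
  have hvb : 2 ^ (b.factorization 2) * v = b := Nat.ordProj_mul_ordCompl_eq_self b 2
  have hu2 : ¬ 2 ∣ u := Nat.not_dvd_ordCompl Nat.prime_two ha.ne'
  have hv2 : ¬ 2 ∣ v := Nat.not_dvd_ordCompl Nat.prime_two hb.ne'
  have hu2' : u % 2 = 1 := Nat.two_dvd_ne_zero.mp hu2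
  have hv2' : v % 2 = 1 := Nat.two_dvd_ne_zero.mp hv2
  -- u * v % 8 = 1
  have huv : (u * v) % 8 = 1 := by
    have h8 : (u * v) % 8 = (u % 8) * (v % 8) % 8 := Nat.mul_mod u v 8
    have h1 : u % 8 % 2 = u % 2 := Nat.mod_mod_of_dvd u (by norm_num)
    have h2 : u % 8 < 8 := Nat.mod_lt _ (by norm_num)
    have : u % 8 = 1 ∨ u % 8 = 3 ∨ u % 8 = 5 ∨ u % 8 = 7 := by omega
    rcases this with h' | h' | h' | h' <;> rw [h8, h', ← h, h']
  obtain ⟨x, hx⟩ : ∃ x, 2 ^ x * u = a := ⟨_, hua⟩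
  obtain ⟨y, hy⟩ : ∃ y, 2 ^ y * v = b := ⟨_, hvb⟩
  have hab : a * b = 2 ^ (x + y) * (u * v) := by
    rw [pow_add, ← hx, ← hy]; ring
  set e := x + y with he
  rcases Nat.lt_or_ge e 4 with h4 | h4
  · interval_cases e <;> simp only [pow_succ, pow_zero] at hab <;> omega
  · left
    have h16 : (16 : ℕ) ∣ a * b := by
      rw [hab]
      exact dvd_mul_of_dvd_left (by
        calc (16:ℕ) = 2 ^ 4 := by norm_num
        _ ∣ 2 ^ e := pow_dvd_pow 2 h4) _
    omega

theorem odd_parts_incongruent_mod_eight (n l1 m1 l2 m2 : ℕ)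
    (hn : n % 16 = 14) (hsum : l1 * m1 + l2 * m2 = n)
    (hl1 : 0 < l1) (hm1 : 0 < m1) (hl2 : 0 < l2) (hm2 : 0 < m2) :
    (ordCompl[2] l1) % 8 ≠ (ordCompl[2] m1) % 8 ∨
    (ordCompl[2] l2) % 8 ≠ (ordCompl[2] m2) % 8 := by
  by_contra hc
  push_neg at hc
  obtain ⟨h1, h2⟩ := hc
  have p1 := prod_mod16_aux l1 m1 hl1 hm1 h1
  have p2 := prod_mod16_aux l2 m2 hl2 hm2 h2
  omega
end

section
/- If n ≡ 14 (mod 16), then σ1(n/2) is divisible by 8 and hence σ1(n) = 3·σ1(n/2) is divisible by 8. -/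
lemma eight_dvd_sigma_of_seven_mod_eight (m : ℕ) (hm : m % 8 = 7) :
    8 ∣ ∑ d ∈ m.divisors, d := by
  have hm0 : m ≠ 0 := by omega
  have key : ((∑ d ∈ m.divisors, d : ℕ) : ZMod 8) = 0 := by
    push_cast
    refine Finset.sum_involution (fun d _ => m / d) ?_ ?_ ?_ ?_
    · intro d hd
      rw [Nat.mem_divisors] at hd
      obtain ⟨hdvd, -⟩ := hd
      have hmul : d * (m / d) = m := Nat.mul_div_cancel' hdvd
      have hcast : (d : ZMod 8) * ((m / d : ℕ) : ZMod 8) = 7 := by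
        rw [← Nat.cast_mul, hmul]
        have : (m : ZMod 8) = ((m % 8 : ℕ) : ZMod 8) := by
          rw [ZMod.natCast_mod]
        rw [this, hm]; rfl
      revert hcast
      generalize (d : ZMod 8) = x
      generalize ((m / d : ℕ) : ZMod 8) = y
      revert x y; decide
    · intro d hd _
      rw [Nat.mem_divisors] at hd
      obtain ⟨hdvd, -⟩ := hd
      intro heq
      have hmul : d * (m / d) = m := Nat.mul_div_cancel' hdvd
      rw [heq] at hmul
      have h8 : d % 8 * (d % 8) % 8 = 7 := by
        rw [← Nat.mul_mod, hmul, hm]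
      have : d % 8 < 8 := Nat.mod_lt _ (by norm_num)
      interval_cases h : d % 8 <;> simp_all
    · intro d hd
      rw [Nat.mem_divisors] at hd ⊢
      exact ⟨Nat.div_dvd_of_dvd hd.1, hm0⟩
    · intro d hd
      rw [Nat.mem_divisors] at hd
      exact Nat.div_div_self hd.1 hm0
  rwa [ZMod.natCast_eq_zero_iff] at key

theorem eight_dvd_sigma_one_of_fourteen_mod_sixteen (n : ℕ) (hn : n % 16 = 14) :
    8 ∣ ∑ d ∈ (n / 2).divisors, d ∧
    (∑ d ∈ n.divisors, d) = 3 * ∑ d ∈ (n / 2).divisors, d ∧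
    8 ∣ ∑ d ∈ n.divisors, d := by
  set m := n / 2 with hmdef
  have hm : m % 8 = 7 := by omega
  have h1 : 8 ∣ ∑ d ∈ m.divisors, d := eight_dvd_sigma_of_seven_mod_eight m hm
  have hco : Nat.Coprime 2 m := by
    exact (Nat.prime_two.coprime_iff_not_dvd).mpr (by omega)
  have hn2 : n = 2 * m := by omega
  have h2 : (∑ d ∈ n.divisors, d) = 3 * ∑ d ∈ m.divisors, d := by
    rw [hn2, Nat.Coprime.sum_divisors_mul hco]
    norm_num [show (2:ℕ).divisors = {1, 2} from rfl]
  exact ⟨h1, h2, h2 ▸ Dvd.dvd.mul_left h1 3⟩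
end

section
/- Let ν2(n) count partitions of n into exactly two part sizes. Then for n ≥ 2, 2·ν2(n) = (Σ_{k=1}^{n−1} d(k) d(n−k)) − σ1(n) + d(n), where d is the number-of-divisors function and σ1 the sum-of-divisors function. -/
private lemma card_antidiag (k : ℕ) : k.divisorsAntidiagonal.card = k.divisors.card := by
  rw [← Nat.map_div_right_divisors, Finset.card_map]

theorem nu2_formula (n : ℕ) (hn : 2 ≤ n) :
    (2 * nu2 n : ℤ) =
      (∑ k ∈ Finset.Ico 1 n, (k.divisors.card : ℤ) * ((n - k).divisors.card : ℤ))
        - (∑ d ∈ n.divisors, (d : ℤ)) + (n.divisors.card : ℤ) := by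
  classical
  set T : Finset ((ℕ × ℕ) × ℕ × ℕ) :=
    (Finset.Ico 1 n).biUnion
      (fun k => k.divisorsAntidiagonal ×ˢ (n - k).divisorsAntidiagonal) with hT
  have hmemT : ∀ p : (ℕ × ℕ) × ℕ × ℕ, p ∈ T ↔
      1 ≤ p.1.1 ∧ 1 ≤ p.1.2 ∧ 1 ≤ p.2.1 ∧ 1 ≤ p.2.2 ∧
        p.1.1 * p.1.2 + p.2.1 * p.2.2 = n := by
    rintro ⟨⟨a, b⟩, c, d⟩
    simp only [hT, Finset.mem_biUnion, Finset.mem_Ico, Finset.mem_product,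
      Nat.mem_divisorsAntidiagonal]
    constructor
    · rintro ⟨k, ⟨hk1, hk2⟩, ⟨hab, hk0⟩, ⟨hcd, hnk0⟩⟩
      subst hab
      have ha : a ≠ 0 := by rintro rfl; simp at hk1
      have hb : b ≠ 0 := by rintro rfl; simp at hk1
      have hc : c ≠ 0 := by rintro rfl; simp at hnk0; omega
      have hd : d ≠ 0 := by rintro rfl; simp at hnk0; omega
      exact ⟨by omega, by omega, by omega, by omega, by omega⟩
    · rintro ⟨ha, hb, hc, hd, hsum⟩
      have hab1 : 0 < a * b := Nat.mul_pos ha hb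
      have hcd1 : 0 < c * d := Nat.mul_pos hc hd
      exact ⟨a * b, ⟨by omega, by omega⟩, ⟨rfl, by omega⟩, by omega, by omega⟩
  have hTcard : T.card = ∑ k ∈ Finset.Ico 1 n, k.divisors.card * (n - k).divisors.card := by
    rw [hT, Finset.card_biUnion]
    · exact Finset.sum_congr rfl fun k _ => by
        rw [Finset.card_product, card_antidiag, card_antidiag]
    · intro x hx y hy hxy
      simp only [Finset.disjoint_left, Finset.mem_product]
      rintro p ⟨h1, -⟩ ⟨h2, -⟩
      exact hxy (((Nat.mem_divisorsAntidiagonal.1 h1).1.symm.trans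
        (Nat.mem_divisorsAntidiagonal.1 h2).1))
  set A := T.filter (fun p => p.2.1 < p.1.1) with hA
  set B := T.filter (fun p => p.1.1 < p.2.1) with hB
  set E := T.filter (fun p => p.1.1 = p.2.1) with hE
  -- split of T.card
  have h1 : E.card + (T.filter fun p => ¬ p.1.1 = p.2.1).card = T.card := by
    rw [hE]
    exact Finset.card_filter_add_card_filter_not (s := T)
      (p := fun p => p.1.1 = p.2.1)
  have h2 := Finset.card_filter_add_card_filter_not
    (s := T.filter fun p => ¬ p.1.1 = p.2.1) (p := fun p => p.1.1 < p.2.1)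
  rw [Finset.filter_filter, Finset.filter_filter] at h2
  have e1 : (T.filter fun p => ¬ p.1.1 = p.2.1 ∧ p.1.1 < p.2.1) = B := by
    rw [hB]; apply Finset.filter_congr; intro p _; constructor
    · rintro ⟨-, h⟩; exact h
    · intro h; exact ⟨by omega, h⟩
  have e2 : (T.filter fun p => ¬ p.1.1 = p.2.1 ∧ ¬ p.1.1 < p.2.1) = A := by
    rw [hA]; apply Finset.filter_congr; intro p _; constructor
    · rintro ⟨h, h'⟩; omega
    · intro h; omega
  rw [e1, e2] at h2
  have hsplit : T.card = A.card + B.card + E.card := by omega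
  -- A.card = nu2 n
  have hinj : Function.Injective
      (fun p : (ℕ × ℕ) × ℕ × ℕ => (p.1.1, p.1.2, p.2.1, p.2.2)) := by
    rintro ⟨⟨a, b⟩, c, d⟩ ⟨⟨a', b'⟩, c', d'⟩ h
    simp_all [Prod.ext_iff]
  have hnu : nu2 n = A.card := by
    have hset : {q : ℕ × ℕ × ℕ × ℕ | q.2.2.1 < q.1 ∧ 1 ≤ q.2.2.1 ∧ 1 ≤ q.2.1 ∧ 1 ≤ q.2.2.2 ∧
        q.1 * q.2.1 + q.2.2.1 * q.2.2.2 = n} =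
        ↑(A.image (fun p => (p.1.1, p.1.2, p.2.1, p.2.2))) := by
      ext q
      obtain ⟨a, b, c, d⟩ := q
      simp only [Finset.coe_image, Set.mem_image, Finset.mem_coe, hA, Finset.mem_filter,
        Set.mem_setOf_eq]
      constructor
      · rintro ⟨h1, h2, h3, h4, h5⟩
        refine ⟨((a, b), (c, d)), ⟨?_, h1⟩, rfl⟩
        rw [hmemT]
        have haa : 1 ≤ a := by omega
        exact ⟨haa, h3, h2, h4, h5⟩
      · rintro ⟨p, ⟨hpT, hlt⟩, hq⟩
        obtain ⟨ha, hb, hc, hd, hsum⟩ := (hmemT p).1 hpT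
        obtain ⟨⟨a', b'⟩, c', d'⟩ := p
        simp only [Prod.mk.injEq] at hq
        obtain ⟨rfl, rfl, rfl, rfl⟩ := hq
        exact ⟨hlt, hc, hb, hd, hsum⟩
    rw [nu2, hset, Set.ncard_coe_finset, Finset.card_image_of_injective _ hinj]
  -- B.card = A.card
  have hBA : B.card = A.card := by
    apply Finset.card_nbij' (i := fun p => (p.2, p.1)) (j := fun p => (p.2, p.1))
    · intro p hp
      rw [hB, Finset.mem_coe, Finset.mem_filter] at hp
      obtain ⟨hpT, hlt⟩ := hp
      obtain ⟨ha, hb, hc, hd, hsum⟩ := (hmemT p).1 hpT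
      rw [hA, Finset.mem_coe, Finset.mem_filter]
      exact ⟨(hmemT _).2 ⟨hc, hd, ha, hb, by rw [add_comm]; exact hsum⟩, hlt⟩
    · intro p hp
      rw [hA, Finset.mem_coe, Finset.mem_filter] at hp
      obtain ⟨hpT, hlt⟩ := hp
      obtain ⟨ha, hb, hc, hd, hsum⟩ := (hmemT p).1 hpT
      rw [hB, Finset.mem_coe, Finset.mem_filter]
      exact ⟨(hmemT _).2 ⟨hc, hd, ha, hb, by rw [add_comm]; exact hsum⟩, hlt⟩
    · intro p _; rfl
    · intro p _; rfl
  -- E description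
  have hEeq : E = n.divisors.biUnion (fun a =>
      (Finset.Ico 1 (n / a)).image (fun b => ((a, b), (a, n / a - b)))) := by
    ext p
    obtain ⟨⟨a, b⟩, c, d⟩ := p
    simp only [hE, Finset.mem_filter, Finset.mem_biUnion, Nat.mem_divisors, Finset.mem_image,
      Finset.mem_Ico, Prod.mk.injEq]
    constructor
    · rintro ⟨hpT, hac⟩
      obtain ⟨ha, hb, hc, hd, hsum⟩ := (hmemT _).1 hpT
      simp only at ha hb hc hd hsum hac
      subst hac
      have hmul : a * (b + d) = n := by rw [mul_add]; exact hsum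
      have hdiv : n / a = b + d := by
        rw [← hmul]; exact Nat.mul_div_cancel_left _ (by omega)
      exact ⟨a, ⟨⟨b + d, hmul.symm⟩, by omega⟩, b, ⟨hb, by omega⟩,
        ⟨rfl, rfl⟩, rfl, by omega⟩
    · rintro ⟨a', ⟨hdvd, hn0⟩, b', ⟨hb1, hb2⟩, ⟨h1, h2⟩, h3, h4⟩
      subst h1; subst h2; subst h3; subst h4
      have ha0 : 1 ≤ a' := by
        rcases Nat.eq_zero_or_pos a' with h | h
        · subst h; simp at hdvd; omega
        · exact h
      refine ⟨?_, rfl⟩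
      rw [hmemT]
      have hd0 : 1 ≤ n / a' - b' := by omega
      refine ⟨ha0, hb1, ha0, hd0, ?_⟩
      have hcomb : b' + (n / a' - b') = n / a' := by omega
      rw [← mul_add, hcomb]
      exact Nat.mul_div_cancel' hdvd
  have hEcard : E.card = ∑ a ∈ n.divisors, (n / a - 1) := by
    rw [hEeq, Finset.card_biUnion]
    · refine Finset.sum_congr rfl fun a _ => ?_
      rw [Finset.card_image_of_injective, Nat.card_Ico]
      intro x y h
      simpa using congrArg (fun p => p.1.2) h
    · intro x hx y hy hxy
      simp only [Finset.disjoint_left, Finset.mem_image]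
      rintro p ⟨b1, -, rfl⟩ ⟨b2, -, h⟩
      exact hxy ((congrArg (fun q => q.1.1) h).symm)
  -- cast everything to ℤ
  have hn0 : n ≠ 0 := by omega
  have hEZ : (E.card : ℤ) = (∑ a ∈ n.divisors, (a : ℤ)) - n.divisors.card := by
    rw [hEcard, Nat.cast_sum]
    have : ∀ a ∈ n.divisors, ((n / a - 1 : ℕ) : ℤ) = ((n / a : ℕ) : ℤ) - 1 := by
      intro a ha
      rw [Nat.mem_divisors] at ha
      have ha0 : 0 < a := Nat.pos_of_dvd_of_pos ha.1 (by omega)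
      have h1 : 1 ≤ n / a := (Nat.one_le_div_iff ha0).2 (Nat.le_of_dvd (by omega) ha.1)
      omega
    rw [Finset.sum_congr rfl this, Finset.sum_sub_distrib]
    rw [Nat.sum_div_divisors n (fun d => (d : ℤ))]
    simp [mul_comm]
  have hTZ : (T.card : ℤ) =
      ∑ k ∈ Finset.Ico 1 n, (k.divisors.card : ℤ) * ((n - k).divisors.card : ℤ) := by
    rw [hTcard]; push_cast; ring_nf
  have hsplitZ : (T.card : ℤ) = (A.card : ℤ) + B.card + E.card := by
    rw [hsplit]; push_cast; ring
  rw [hnu]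

  rw [hBA] at hsplitZ
  linarith [hTZ, hsplitZ, hEZ]
end

section
/- Let n ≡ 2 (mod 4). The number of partitions λ1^{m1} λ2^{m2} of n into two part sizes with parity class EOEO (λ1 even, m1 odd, λ2 even, m2 odd) equals the number with parity class OEOE (λ1 odd, m1 even, λ2 odd, m2 even) plus σ1(n/2)/2 − d(n)/4. -/
/-- Partitions of `n` into exactly two part sizes, as quadruples `(λ1, m1, λ2, m2)`. -/
def TwoSize (n : ℕ) : Set (ℕ × ℕ × ℕ × ℕ) :=
  {q | q.2.2.1 < q.1 ∧ 1 ≤ q.2.2.1 ∧ 1 ≤ q.2.1 ∧ 1 ≤ q.2.2.2 ∧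
    q.1 * q.2.1 + q.2.2.1 * q.2.2.2 = n}

namespace TwoSizeAux

abbrev Q := ℕ × ℕ × ℕ × ℕ

def f2 (q : Q) : Q := (2 * q.1, q.2.1, 2 * q.2.2.1, q.2.2.2)
def g2 (q : Q) : Q := (q.1, 2 * q.2.1, q.2.2.1, 2 * q.2.2.2)
def tr (q : Q) : Q := (q.2.1, q.1, q.2.2.2, q.2.2.1)
def sw (q : Q) : Q := (q.2.2.1, q.2.2.2, q.1, q.2.1)

lemma f2_inj : Function.Injective f2 := by
  rintro ⟨a,b,c,d⟩ ⟨a',b',c',d'⟩ h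
  simp only [f2, Prod.mk.injEq] at h
  simp only [Prod.mk.injEq]; omega

lemma g2_inj : Function.Injective g2 := by
  rintro ⟨a,b,c,d⟩ ⟨a',b',c',d'⟩ h
  simp only [g2, Prod.mk.injEq] at h
  simp only [Prod.mk.injEq]; omega

lemma tr_inj : Function.Injective tr := by
  rintro ⟨a,b,c,d⟩ ⟨a',b',c',d'⟩ h
  simp only [tr, Prod.mk.injEq] at h
  simp only [Prod.mk.injEq]; omega

lemma sw_inj : Function.Injective sw := by
  rintro ⟨a,b,c,d⟩ ⟨a',b',c',d'⟩ h
  simp only [sw, Prod.mk.injEq] at h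
  simp only [Prod.mk.injEq]; omega

def Agt (N : ℕ) : Set Q := {q | q.2.2.1 < q.1 ∧ 1 ≤ q.2.2.1 ∧ Odd q.2.1 ∧ Odd q.2.2.2 ∧
    q.1 * q.2.1 + q.2.2.1 * q.2.2.2 = N}
def Afull (N : ℕ) : Set Q := {q | 1 ≤ q.1 ∧ 1 ≤ q.2.2.1 ∧ Odd q.2.1 ∧ Odd q.2.2.2 ∧
    q.1 * q.2.1 + q.2.2.1 * q.2.2.2 = N}
def Bgt (N : ℕ) : Set Q := {q | q.2.2.1 < q.1 ∧ 1 ≤ q.2.2.1 ∧ Odd q.1 ∧ Odd q.2.2.1 ∧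
    1 ≤ q.2.1 ∧ 1 ≤ q.2.2.2 ∧ q.1 * q.2.1 + q.2.2.1 * q.2.2.2 = N}
def Bfull (N : ℕ) : Set Q := {q | Odd q.1 ∧ Odd q.2.2.1 ∧ 1 ≤ q.2.1 ∧ 1 ≤ q.2.2.2 ∧
    q.1 * q.2.1 + q.2.2.1 * q.2.2.2 = N}
def Bdiag (N : ℕ) : Set Q := {q | Odd q.1 ∧ q.2.2.1 = q.1 ∧ 1 ≤ q.2.1 ∧ 1 ≤ q.2.2.2 ∧
    q.1 * q.2.1 + q.2.2.1 * q.2.2.2 = N}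

lemma mem_Agt {N a m1 b m2 : ℕ} : ((a,m1,b,m2) : Q) ∈ Agt N ↔
    (b < a ∧ 1 ≤ b ∧ Odd m1 ∧ Odd m2 ∧ a * m1 + b * m2 = N) := Iff.rfl
lemma mem_Afull {N a m1 b m2 : ℕ} : ((a,m1,b,m2) : Q) ∈ Afull N ↔
    (1 ≤ a ∧ 1 ≤ b ∧ Odd m1 ∧ Odd m2 ∧ a * m1 + b * m2 = N) := Iff.rfl
lemma mem_Bgt {N a m1 b m2 : ℕ} : ((a,m1,b,m2) : Q) ∈ Bgt N ↔
    (b < a ∧ 1 ≤ b ∧ Odd a ∧ Odd b ∧ 1 ≤ m1 ∧ 1 ≤ m2 ∧ a * m1 + b * m2 = N) := Iff.rfl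
lemma mem_Bfull {N a m1 b m2 : ℕ} : ((a,m1,b,m2) : Q) ∈ Bfull N ↔
    (Odd a ∧ Odd b ∧ 1 ≤ m1 ∧ 1 ≤ m2 ∧ a * m1 + b * m2 = N) := Iff.rfl
lemma mem_Bdiag {N a m1 b m2 : ℕ} : ((a,m1,b,m2) : Q) ∈ Bdiag N ↔
    (Odd a ∧ b = a ∧ 1 ≤ m1 ∧ 1 ≤ m2 ∧ a * m1 + b * m2 = N) := Iff.rfl
lemma mem_TwoSize {n a m1 b m2 : ℕ} : ((a,m1,b,m2) : Q) ∈ TwoSize n ↔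
    (b < a ∧ 1 ≤ b ∧ 1 ≤ m1 ∧ 1 ≤ m2 ∧ a * m1 + b * m2 = n) := Iff.rfl

lemma mem_sepE {n a m1 b m2 : ℕ} :
    ((a,m1,b,m2) : Q) ∈ {q ∈ TwoSize n | Even q.1 ∧ Odd q.2.1 ∧ Even q.2.2.1 ∧ Odd q.2.2.2} ↔
    ((b < a ∧ 1 ≤ b ∧ 1 ≤ m1 ∧ 1 ≤ m2 ∧ a * m1 + b * m2 = n) ∧
      Even a ∧ Odd m1 ∧ Even b ∧ Odd m2) := Iff.rfl

lemma mem_sepO {n a m1 b m2 : ℕ} :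
    ((a,m1,b,m2) : Q) ∈ {q ∈ TwoSize n | Odd q.1 ∧ Even q.2.1 ∧ Odd q.2.2.1 ∧ Even q.2.2.2} ↔
    ((b < a ∧ 1 ≤ b ∧ 1 ≤ m1 ∧ 1 ≤ m2 ∧ a * m1 + b * m2 = n) ∧
      Odd a ∧ Even m1 ∧ Odd b ∧ Even m2) := Iff.rfl

lemma odd_pos' {m : ℕ} (h : Odd m) : 1 ≤ m := by
  rcases h with ⟨k, rfl⟩; omega

lemma finite_box (N : ℕ) {s : Set Q}
    (h : ∀ a b c d : ℕ, (a,b,c,d) ∈ s → a ≤ N ∧ b ≤ N ∧ c ≤ N ∧ d ≤ N) : s.Finite := by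
  apply Set.Finite.subset ((Set.finite_Iic N).prod (((Set.finite_Iic N)).prod
    ((Set.finite_Iic N).prod (Set.finite_Iic N))))
  rintro ⟨a,b,c,d⟩ hq
  obtain ⟨h1,h2,h3,h4⟩ := h a b c d hq
  exact ⟨h1,h2,h3,h4⟩

lemma afull_finite (N : ℕ) : (Afull N).Finite := by
  apply finite_box N
  rintro a m1 b m2 hq
  rw [mem_Afull] at hq
  obtain ⟨h1,h2,h3,h4,h5⟩ := hq
  have hm1 := odd_pos' h3
  have hm2 := odd_pos' h4
  have e1 : a * 1 ≤ a * m1 := Nat.mul_le_mul_left a hm1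
  have e2 : 1 * m1 ≤ a * m1 := Nat.mul_le_mul_right m1 h1
  have e3 : b * 1 ≤ b * m2 := Nat.mul_le_mul_left b hm2
  have e4 : 1 * m2 ≤ b * m2 := Nat.mul_le_mul_right m2 h2
  simp only [mul_one, one_mul] at e1 e2 e3 e4
  exact ⟨by omega, by omega, by omega, by omega⟩

lemma bfull_finite (N : ℕ) : (Bfull N).Finite := by
  apply finite_box N
  rintro a m1 b m2 hq
  rw [mem_Bfull] at hq
  obtain ⟨h1,h2,h3,h4,h5⟩ := hq
  have ha := odd_pos' h1
  have hb := odd_pos' h2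
  have e1 : a * 1 ≤ a * m1 := Nat.mul_le_mul_left a h3
  have e2 : 1 * m1 ≤ a * m1 := Nat.mul_le_mul_right m1 ha
  have e3 : b * 1 ≤ b * m2 := Nat.mul_le_mul_left b h4
  have e4 : 1 * m2 ≤ b * m2 := Nat.mul_le_mul_right m2 hb
  simp only [mul_one, one_mul] at e1 e2 e3 e4
  exact ⟨by omega, by omega, by omega, by omega⟩

lemma agt_sub (N : ℕ) : Agt N ⊆ Afull N := by
  rintro ⟨a,m1,b,m2⟩ hq
  rw [mem_Agt] at hq
  rw [mem_Afull]
  obtain ⟨h1,h2,h3,h4,h5⟩ := hq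
  exact ⟨by omega, h2, h3, h4, h5⟩

lemma bgt_sub (N : ℕ) : Bgt N ⊆ Bfull N := by
  rintro ⟨a,m1,b,m2⟩ hq
  rw [mem_Bgt] at hq
  rw [mem_Bfull]
  obtain ⟨h1,h2,h3,h4,h5,h6,h7⟩ := hq
  exact ⟨h3, h4, h5, h6, h7⟩

lemma bdiag_sub (N : ℕ) : Bdiag N ⊆ Bfull N := by
  rintro ⟨a,m1,b,m2⟩ hq
  rw [mem_Bdiag] at hq
  rw [mem_Bfull]
  obtain ⟨h1,h2,h3,h4,h5⟩ := hq
  exact ⟨h1, h2 ▸ h1, h3, h4, h5⟩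

lemma bfull_eq_tr_afull (N : ℕ) : Bfull N = tr '' Afull N := by
  apply Set.Subset.antisymm
  · rintro ⟨x,c,y,d⟩ hq
    rw [mem_Bfull] at hq
    obtain ⟨h1,h2,h3,h4,h5⟩ := hq
    refine ⟨(c,x,d,y), mem_Afull.mpr ⟨h3, h4, h1, h2, ?_⟩, rfl⟩
    rw [mul_comm c x, mul_comm d y]; exact h5
  · rintro _ ⟨⟨a,m1,b,m2⟩, hmem, rfl⟩
    rw [mem_Afull] at hmem
    obtain ⟨h1,h2,h3,h4,h5⟩ := hmem
    show ((m1, a, m2, b) : Q) ∈ Bfull N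
    rw [mem_Bfull]
    refine ⟨h3, h4, h1, h2, ?_⟩
    rw [mul_comm m1 a, mul_comm m2 b]; exact h5

lemma afull_split (N : ℕ) (hN : Odd N) : Afull N = Agt N ∪ sw '' Agt N := by
  apply Set.Subset.antisymm
  · rintro ⟨a,m1,b,m2⟩ hq
    rw [mem_Afull] at hq
    obtain ⟨h1,h2,h3,h4,h5⟩ := hq
    rcases lt_trichotomy b a with h | h | h
    · exact Or.inl (mem_Agt.mpr ⟨h, h2, h3, h4, h5⟩)
    · exfalso
      subst h
      have hh : b * m1 + b * m2 = b * (m1 + m2) := by ring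
      rw [hh] at h5
      have heven : Even (m1 + m2) := h3.add_odd h4
      have : Even N := h5 ▸ (heven.mul_left b)
      exact (Nat.not_odd_iff_even.mpr this) hN
    · exact Or.inr ⟨(b, m2, a, m1), mem_Agt.mpr ⟨h, h1, h4, h3, by omega⟩, rfl⟩
  · rintro q hq
    rcases hq with hq | ⟨⟨x,u,y,v⟩, hmem, rfl⟩
    · exact agt_sub N hq
    · rw [mem_Agt] at hmem
      obtain ⟨h1,h2,h3,h4,h5⟩ := hmem
      show ((y, v, x, u) : Q) ∈ Afull N
      rw [mem_Afull]
      exact ⟨h2, by omega, h4, h3, by omega⟩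

lemma bfull_split (N : ℕ) : Bfull N = (Bgt N ∪ sw '' Bgt N) ∪ Bdiag N := by
  apply Set.Subset.antisymm
  · rintro ⟨a,m1,b,m2⟩ hq
    rw [mem_Bfull] at hq
    obtain ⟨h1,h2,h3,h4,h5⟩ := hq
    rcases lt_trichotomy b a with h | h | h
    · exact Or.inl (Or.inl (mem_Bgt.mpr ⟨h, odd_pos' h2, h1, h2, h3, h4, h5⟩))
    · exact Or.inr (mem_Bdiag.mpr ⟨h1, h, h3, h4, h5⟩)
    · exact Or.inl (Or.inr ⟨(b, m2, a, m1),
        mem_Bgt.mpr ⟨h, odd_pos' h1, h2, h1, h4, h3, by omega⟩, rfl⟩)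
  · rintro q hq
    rcases hq with (hq | ⟨⟨x,u,y,v⟩, hmem, rfl⟩) | hq
    · exact bgt_sub N hq
    · rw [mem_Bgt] at hmem
      obtain ⟨h1,h2,h3,h4,h5,h6,h7⟩ := hmem
      show ((y, v, x, u) : Q) ∈ Bfull N
      rw [mem_Bfull]
      exact ⟨h4, h3, h6, h5, by omega⟩
    · exact bdiag_sub N hq

lemma EOEO_eq (n N : ℕ) (hn2 : n = 2 * N) :
    {q ∈ TwoSize n | Even q.1 ∧ Odd q.2.1 ∧ Even q.2.2.1 ∧ Odd q.2.2.2} = f2 '' Agt N := by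
  apply Set.Subset.antisymm
  · rintro ⟨a,m1,b,m2⟩ hq
    rw [mem_sepE] at hq
    obtain ⟨⟨h1,h2,h3,h4,h5⟩, he1, ho1, he2, ho2⟩ := hq
    obtain ⟨a', rfl⟩ := he1
    obtain ⟨b', rfl⟩ := he2
    refine ⟨(a', m1, b', m2), mem_Agt.mpr ⟨by omega, by omega, ho1, ho2, ?_⟩, ?_⟩
    · have h6 : 2 * (a' * m1 + b' * m2) = 2 * N := by
        rw [← hn2, ← h5]; ring
      omega
    · show ((2 * a', m1, 2 * b', m2) : Q) = (a' + a', m1, b' + b', m2)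
      refine Prod.ext ?_ (Prod.ext ?_ (Prod.ext ?_ ?_)) <;> dsimp only <;> omega
  · rintro _ ⟨⟨x,u,y,v⟩, hmem, rfl⟩
    rw [mem_Agt] at hmem
    obtain ⟨h1,h2,h3,h4,h5⟩ := hmem
    have hf : f2 (x,u,y,v) = ((2 * x, u, 2 * y, v) : Q) := rfl
    rw [hf, mem_sepE]
    refine ⟨⟨by omega, by omega, odd_pos' h3, odd_pos' h4, ?_⟩,
      ⟨x, by omega⟩, h3, ⟨y, by omega⟩, h4⟩
    rw [hn2, ← h5]; ring

lemma OEOE_eq (n N : ℕ) (hn2 : n = 2 * N) :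
    {q ∈ TwoSize n | Odd q.1 ∧ Even q.2.1 ∧ Odd q.2.2.1 ∧ Even q.2.2.2} = g2 '' Bgt N := by
  apply Set.Subset.antisymm
  · rintro ⟨a,m1,b,m2⟩ hq
    rw [mem_sepO] at hq
    obtain ⟨⟨h1,h2,h3,h4,h5⟩, ho1, he1, ho2, he2⟩ := hq
    obtain ⟨c, rfl⟩ := he1
    obtain ⟨d, rfl⟩ := he2
    refine ⟨(a, c, b, d), mem_Bgt.mpr ⟨h1, h2, ho1, ho2, by omega, by omega, ?_⟩, ?_⟩
    · have h6 : 2 * (a * c + b * d) = 2 * N := by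
        rw [← hn2, ← h5]; ring
      omega
    · show ((a, 2 * c, b, 2 * d) : Q) = (a, c + c, b, d + d)
      refine Prod.ext ?_ (Prod.ext ?_ (Prod.ext ?_ ?_)) <;> dsimp only <;> omega
  · rintro _ ⟨⟨x,u,y,v⟩, hmem, rfl⟩
    rw [mem_Bgt] at hmem
    obtain ⟨h1,h2,h3,h4,h5,h6,h7⟩ := hmem
    have hf : g2 (x,u,y,v) = ((x, 2 * u, y, 2 * v) : Q) := rfl
    rw [hf, mem_sepO]
    refine ⟨⟨h1, h2, by omega, by omega, ?_⟩,
      h3, ⟨u, by omega⟩, h4, ⟨v, by omega⟩⟩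
    rw [hn2, ← h7]; ring

lemma bdiag_eq (N : ℕ) (hN : Odd N) :
    Bdiag N = (fun p : (_ : ℕ) × ℕ => (N / p.1, p.2, N / p.1, p.1 - p.2)) ''
      ↑(N.divisors.sigma fun e => Finset.Ico 1 e) := by
  have hN0 : N ≠ 0 := by rcases hN with ⟨k, rfl⟩; omega
  apply Set.Subset.antisymm
  · rintro ⟨x,c,y,d⟩ hq
    rw [mem_Bdiag] at hq
    obtain ⟨h1,h2,h3,h4,h5⟩ := hq
    subst h2
    have hsum : y * (c + d) = N := by rw [mul_add]; exact h5
    have hx : 1 ≤ y := odd_pos' h1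
    have hdvd : (c + d) ∣ N := Dvd.intro_left y hsum
    refine ⟨⟨c + d, c⟩, ?_, ?_⟩
    · simp only [Finset.coe_sigma, Set.mem_sigma_iff, Finset.mem_coe,
        Nat.mem_divisors, Finset.mem_Ico]
      exact ⟨⟨hdvd, hN0⟩, h3, by omega⟩
    · have hxe : N / (c + d) = y := by
        rw [← hsum, Nat.mul_div_cancel _ (show 0 < c + d by omega)]
      show ((N / (c + d), c, N / (c + d), (c + d) - c) : Q) = (y, c, y, d)
      have hcd : (c + d) - c = d := by omega
      rw [hxe, hcd]
  · rintro _ ⟨⟨e, c'⟩, hmem, rfl⟩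
    simp only [Finset.coe_sigma, Set.mem_sigma_iff, Finset.mem_coe,
      Nat.mem_divisors, Finset.mem_Ico] at hmem
    obtain ⟨⟨hdvd, -⟩, hc1, hce⟩ := hmem
    have he0 : 0 < e := by omega
    have hxe : N / e * e = N := Nat.div_mul_cancel hdvd
    have hxodd : Odd (N / e) := by
      have hh : Odd (N / e * e) := by rw [hxe]; exact hN
      exact (Nat.odd_mul.mp hh).1
    show ((N / e, c', N / e, e - c') : Q) ∈ Bdiag N
    rw [mem_Bdiag]
    refine ⟨hxodd, rfl, hc1, by omega, ?_⟩
    have hh : N / e * c' + N / e * (e - c') = N / e * e := by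
      rw [← mul_add]; congr 1; omega
    rw [hh, hxe]

lemma bdiag_ncard (N : ℕ) (hN : Odd N) :
    (Bdiag N).ncard = ∑ e ∈ N.divisors, (e - 1) := by
  rw [bdiag_eq N hN, Set.ncard_image_of_injOn, Set.ncard_coe_finset,
    Finset.card_sigma]
  · apply Finset.sum_congr rfl
    intro e _
    rw [Nat.card_Ico]
  · rintro ⟨e, c⟩ hmem ⟨e', c'⟩ hmem' heq
    simp only [Finset.coe_sigma, Set.mem_sigma_iff, Finset.mem_coe,
      Nat.mem_divisors, Finset.mem_Ico] at hmem hmem'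
    obtain ⟨⟨hdvd, -⟩, hc1, hce⟩ := hmem
    obtain ⟨⟨hdvd', -⟩, hc1', hce'⟩ := hmem'
    simp only [Prod.mk.injEq] at heq
    obtain ⟨hx, rfl, -, hd⟩ := heq
    have he : e = e' := by omega
    subst he
    rfl

end TwoSizeAux

open TwoSizeAux

theorem EOEO_eq_OEOE_add (n : ℕ) (hn : n % 4 = 2) :
    (Set.ncard {q ∈ TwoSize n |
        Even q.1 ∧ Odd q.2.1 ∧ Even q.2.2.1 ∧ Odd q.2.2.2} : ℚ) =
      (Set.ncard {q ∈ TwoSize n |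
        Odd q.1 ∧ Even q.2.1 ∧ Odd q.2.2.1 ∧ Even q.2.2.2} : ℚ) +
      ((∑ d ∈ (n / 2).divisors, d : ℕ) : ℚ) / 2 - ((n.divisors.card : ℚ) / 4) := by
  set N := n / 2 with hNdef
  have hn2 : n = 2 * N := by omega
  have hNodd : Odd N := by rw [Nat.odd_iff]; omega
  -- finiteness
  have hAfin := afull_finite N
  have hBfin := bfull_finite N
  have hAgtfin : (Agt N).Finite := hAfin.subset (agt_sub N)
  have hBgtfin : (Bgt N).Finite := hBfin.subset (bgt_sub N)
  have hBdfin : (Bdiag N).Finite := hBfin.subset (bdiag_sub N)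
  -- counts of the two sets in the statement
  have e1 : {q ∈ TwoSize n | Even q.1 ∧ Odd q.2.1 ∧ Even q.2.2.1 ∧ Odd q.2.2.2}.ncard
      = (Agt N).ncard := by
    rw [EOEO_eq n N hn2, Set.ncard_image_of_injective _ f2_inj]
  have e2 : {q ∈ TwoSize n | Odd q.1 ∧ Even q.2.1 ∧ Odd q.2.2.1 ∧ Even q.2.2.2}.ncard
      = (Bgt N).ncard := by
    rw [OEOE_eq n N hn2, Set.ncard_image_of_injective _ g2_inj]
  -- Afull = 2 * Agt
  have dA : Disjoint (Agt N) (sw '' Agt N) := by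
    rw [Set.disjoint_left]
    rintro ⟨a,m1,b,m2⟩ hq ⟨⟨x,u,y,v⟩, hmem, heq⟩
    rw [mem_Agt] at hq hmem
    obtain ⟨rfl, rfl, rfl, rfl⟩ : y = a ∧ v = m1 ∧ x = b ∧ u = m2 := by
      simpa [sw, Prod.ext_iff] using heq
    omega
  have cA : (Afull N).ncard = 2 * (Agt N).ncard := by
    rw [afull_split N hNodd, Set.ncard_union_eq dA hAgtfin (hAgtfin.image _),
      Set.ncard_image_of_injective _ sw_inj]
    ring
  -- Bfull = 2 * Bgt + Bdiag
  have dB1 : Disjoint (Bgt N) (sw '' Bgt N) := by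
    rw [Set.disjoint_left]
    rintro ⟨a,m1,b,m2⟩ hq ⟨⟨x,u,y,v⟩, hmem, heq⟩
    rw [mem_Bgt] at hq hmem
    obtain ⟨rfl, rfl, rfl, rfl⟩ : y = a ∧ v = m1 ∧ x = b ∧ u = m2 := by
      simpa [sw, Prod.ext_iff] using heq
    omega
  have dB2 : Disjoint (Bgt N ∪ sw '' Bgt N) (Bdiag N) := by
    rw [Set.disjoint_left]
    rintro ⟨a,m1,b,m2⟩ hq hd
    rw [mem_Bdiag] at hd
    rcases hq with hq | ⟨⟨x,u,y,v⟩, hmem, heq⟩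
    · rw [mem_Bgt] at hq; omega
    · rw [mem_Bgt] at hmem
      obtain ⟨rfl, rfl, rfl, rfl⟩ : y = a ∧ v = m1 ∧ x = b ∧ u = m2 := by
        simpa [sw, Prod.ext_iff] using heq
      omega
  have cB : (Bfull N).ncard = 2 * (Bgt N).ncard + (Bdiag N).ncard := by
    rw [bfull_split N,
      Set.ncard_union_eq dB2 (hBgtfin.union (hBgtfin.image _)) hBdfin,
      Set.ncard_union_eq dB1 hBgtfin (hBgtfin.image _),
      Set.ncard_image_of_injective _ sw_inj]
    ring
  -- Afull = Bfull
  have cAB : (Afull N).ncard = (Bfull N).ncard := by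
    rw [bfull_eq_tr_afull, Set.ncard_image_of_injective _ tr_inj]
  -- key natural-number identity
  have key : 2 * (Agt N).ncard = 2 * (Bgt N).ncard + ∑ e ∈ N.divisors, (e - 1) := by
    rw [← bdiag_ncard N hNodd, ← cA, ← cB, cAB]
  -- divisor counts
  have hN0 : N ≠ 0 := by omega
  have hcop : Nat.Coprime 2 N := Nat.coprime_two_left.mpr hNodd
  have hdn : n.divisors.card = 2 * N.divisors.card := by
    rw [hn2, Nat.Coprime.card_divisors_mul hcop,
      show (Nat.divisors 2).card = 2 from by decide]
  -- sum of (e-1) over divisors, in ℚ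
  have hsum : ((∑ e ∈ N.divisors, (e - 1) : ℕ) : ℚ)
      = ((∑ e ∈ N.divisors, e : ℕ) : ℚ) - (N.divisors.card : ℚ) := by
    rw [Nat.cast_sum, Nat.cast_sum]
    rw [Finset.sum_congr rfl (fun e he => by
      have : 1 ≤ e := Nat.pos_of_mem_divisors he
      rw [Nat.cast_sub this, Nat.cast_one])]
    rw [Finset.sum_sub_distrib, Finset.sum_const, nsmul_eq_mul, mul_one]
  -- finish
  rw [e1, e2]
  have keyQ : 2 * ((Agt N).ncard : ℚ) = 2 * ((Bgt N).ncard : ℚ)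
      + (((∑ e ∈ N.divisors, (e - 1) : ℕ)) : ℚ) := by
    exact_mod_cast congrArg (Nat.cast : ℕ → ℚ) key
  rw [hsum] at keyQ
  have hdnQ : (n.divisors.card : ℚ) = 2 * (N.divisors.card : ℚ) := by
    exact_mod_cast congrArg (Nat.cast : ℕ → ℚ) hdn
  rw [hdnQ]
  linarith
end

section
/- Let n ≡ 2 (mod 4). The number of partitions of n into two part sizes of the form (2^{1+t} k)^a (2k)^b with t ≥ 1 and k, a, b all odd equals σ1(n/2)/2 − d(n/2)/2 (equivalently σ1(n/2)/2 − d(n)/4). -/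
/-- The number of partitions of `n ≡ 2 (mod 4)` into two part sizes of the form
`(2^{1+t} k)^a (2k)^b` with `t ≥ 1` and `k, a, b` all odd equals
`σ₁(n/2)/2 − d(n/2)/2`. -/
theorem special_EOEO_count (n : ℕ) (hn : n % 4 = 2) :
    (Set.ncard {q ∈ TwoSize n | ∃ t k, 1 ≤ t ∧ Odd k ∧ Odd q.2.1 ∧ Odd q.2.2.2 ∧
        q.1 = 2 ^ (1 + t) * k ∧ q.2.2.1 = 2 * k} : ℚ) =
      ((∑ d ∈ (n / 2).divisors, d : ℕ) : ℚ) / 2 - (((n / 2).divisors.card : ℚ) / 2) := by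
  set m := n / 2 with hmdef
  have hmodd : Odd m := by rw [Nat.odd_iff]; omega
  have hm0 : m ≠ 0 := by omega
  have hnm : n = 2 * m := by omega
  -- the indexing finset
  set T : Finset ((_ : ℕ) × ℕ) :=
    m.divisors.sigma (fun k => (Finset.Icc 1 ((m / k - 1) / 2)).image (fun j => 2 * j)) with hT
  -- characterize membership in T
  have hTmem : ∀ k e : ℕ, (⟨k, e⟩ : (_ : ℕ) × ℕ) ∈ T ↔
      k ∣ m ∧ e % 2 = 0 ∧ 1 ≤ e ∧ e ≤ m / k - 1 := by
    intro k e
    simp only [hT, Finset.mem_sigma, Finset.mem_image, Finset.mem_Icc, Nat.mem_divisors]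
    constructor
    · rintro ⟨⟨hkd, -⟩, j, ⟨hj1, hj2⟩, rfl⟩
      refine ⟨hkd, by omega, by omega, by omega⟩
    · rintro ⟨hkd, he2, he1, hele⟩
      exact ⟨⟨hkd, hm0⟩, e / 2, by omega, by omega⟩
  -- the map from T to quadruples
  set ψ : ((_ : ℕ) × ℕ) → ℕ × ℕ × ℕ × ℕ := fun p =>
    (2 ^ (1 + p.2.factorization 2) * p.1, p.2 / 2 ^ (p.2.factorization 2),
      2 * p.1, m / p.1 - p.2) with hψ
  have hSeq : {q ∈ TwoSize n | ∃ t k, 1 ≤ t ∧ Odd k ∧ Odd q.2.1 ∧ Odd q.2.2.2 ∧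
      q.1 = 2 ^ (1 + t) * k ∧ q.2.2.1 = 2 * k} = ψ '' ↑T := by
    ext ⟨l1, a, l2, b⟩
    constructor
    · rintro ⟨⟨hlt, hl2, ha1, hb1, heq⟩, t, k, ht, hk, haodd, hbodd, rfl, rfl⟩
      dsimp only at hlt hl2 ha1 hb1 heq haodd hbodd
      have hk1 : 1 ≤ k := hk.pos
      have ha0 : a ≠ 0 := by omega
      have h2p : 2 ^ (1 + t) = 2 * 2 ^ t := by rw [pow_add, pow_one]
      -- derive k * (2^t * a + b) = m
      have hkey : k * (2 ^ t * a + b) = m := by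
        rw [h2p] at heq
        nlinarith [heq, hnm]
      have hkd : k ∣ m := ⟨_, hkey.symm⟩
      have hMk : m / k = 2 ^ t * a + b := by
        rw [← hkey, Nat.mul_div_cancel_left _ (by omega)]
      set e := 2 ^ t * a with he
      have he1 : 1 ≤ e := Nat.mul_pos (pow_pos (by norm_num) t) (by omega)
      have he2 : e % 2 = 0 := by
        have : (2 : ℕ) ∣ e := Dvd.dvd.mul_right (dvd_pow_self 2 (by omega)) a
        omega
      have hele : e ≤ m / k - 1 := by omega
      have h2a : ¬ (2 : ℕ) ∣ a := by rw [Nat.odd_iff] at haodd; omega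
      have hfact : e.factorization 2 = t := by
        rw [he, Nat.factorization_mul (pow_ne_zero t two_ne_zero) ha0]
        simp [Nat.Prime.factorization_pow Nat.prime_two,
          Nat.factorization_eq_zero_of_not_dvd h2a]
      refine ⟨⟨k, e⟩, (hTmem k e).2 ⟨hkd, he2, he1, hele⟩, ?_⟩
      simp only [hψ, hfact, Prod.mk.injEq]
      refine ⟨trivial, ?_, trivial, ?_⟩
      · rw [he]; exact Nat.mul_div_cancel_left a (pow_pos (by norm_num) t)
      · omega
    · rintro ⟨⟨k, e⟩, hmem, heq⟩
      rw [Finset.mem_coe, hTmem] at hmem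
      obtain ⟨hkd, he2, he1, hele⟩ := hmem
      rw [← heq]
      have hk1 : 1 ≤ k := Nat.pos_of_dvd_of_pos hkd (by omega)
      have hkodd : Odd k := by
        obtain ⟨c, hc⟩ := hkd
        exact (Nat.odd_mul.mp (hc ▸ hmodd)).1
      have hModd : Odd (m / k) := by
        obtain ⟨c, hc⟩ := Nat.div_dvd_of_dvd hkd
        exact (Nat.odd_mul.mp (hc ▸ hmodd)).1
      have hM1 : 1 ≤ m / k := hModd.pos
      set t := e.factorization 2 with htdef
      have ht1 : 1 ≤ t :=
        Nat.Prime.factorization_pos_of_dvd Nat.prime_two (by omega) (by omega)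
      set a := e / 2 ^ t with hadef
      have haodd : Odd a := by
        rw [Nat.odd_iff, ← Nat.two_dvd_ne_zero]
        exact Nat.not_dvd_ordCompl Nat.prime_two (by omega)
      have hea : 2 ^ t * a = e := Nat.ordProj_mul_ordCompl_eq_self e 2
      have ha1 : 1 ≤ a := Nat.ordCompl_pos 2 (by omega)
      have hbodd : Odd (m / k - e) :=
        Nat.Odd.sub_even (by omega) hModd (Nat.even_iff.mpr he2)
      have hb1 : 1 ≤ m / k - e := by omega
      have h4 : (2 : ℕ) ^ (1 + t) ≥ 4 := by
        calc (4 : ℕ) = 2 ^ 2 := by norm_num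
        _ ≤ 2 ^ (1 + t) := Nat.pow_le_pow_right (by norm_num) (by omega)
      refine ⟨⟨?_, ?_, ha1, hb1, ?_⟩, t, k, ht1, hkodd, haodd, hbodd, rfl, rfl⟩
      · show 2 * k < 2 ^ (1 + t) * k
        calc 2 * k < 4 * k := by omega
        _ ≤ 2 ^ (1 + t) * k := Nat.mul_le_mul h4 (le_refl k)
      · show 1 ≤ 2 * k; omega
      · show 2 ^ (1 + t) * k * a + 2 * k * (m / k - e) = n
        have h2p : 2 ^ (1 + t) = 2 * 2 ^ t := by rw [pow_add, pow_one]
        calc 2 ^ (1 + t) * k * a + 2 * k * (m / k - e)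
            = 2 * k * (2 ^ t * a) + 2 * k * (m / k - e) := by rw [h2p]; ring
          _ = 2 * k * (e + (m / k - e)) := by rw [hea]; ring
          _ = 2 * k * (m / k) := by congr 1; omega
          _ = 2 * m := by rw [mul_assoc, Nat.mul_div_cancel' hkd]
          _ = n := hnm.symm
  have hinj : Set.InjOn ψ ↑T := by
    rintro ⟨k, e⟩ hke ⟨k', e'⟩ hke' heq
    rw [Finset.mem_coe, hTmem] at hke hke'
    simp only [hψ, Prod.mk.injEq] at heq
    obtain ⟨-, -, h3, h4⟩ := heq
    have hkk : k = k' := by omega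
    subst hkk
    have hb1 : e ≤ m / k - 1 := hke.2.2.2
    have hb2 : e' ≤ m / k - 1 := hke'.2.2.2
    have h1 : 1 ≤ e := hke.2.2.1
    have h1' : 1 ≤ e' := hke'.2.2.1
    have : e = e' := by omega
    subst this
    rfl
  rw [hSeq, Set.ncard_image_of_injOn hinj, Set.ncard_coe_finset, hT, Finset.card_sigma]
  have hcard : ∀ k ∈ m.divisors,
      ((Finset.Icc 1 ((m / k - 1) / 2)).image (fun j => 2 * j)).card = (m / k - 1) / 2 := by
    intro k hk
    rw [Finset.card_image_of_injective _ (fun x y h => by omega), Nat.card_Icc]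
    omega
  rw [Finset.sum_congr rfl hcard]
  -- now the arithmetic
  have hterm : ∀ k ∈ m.divisors, (((m / k - 1) / 2 : ℕ) : ℚ) = ((m / k : ℕ) : ℚ) / 2 - 1 / 2 := by
    intro k hk
    rw [Nat.mem_divisors] at hk
    have hModd : Odd (m / k) := by
      obtain ⟨c, hc⟩ := Nat.div_dvd_of_dvd hk.1
      exact (Nat.odd_mul.mp (hc ▸ hmodd)).1
    have hM1 : 1 ≤ m / k := hModd.pos
    have h2 : (2 : ℕ) ∣ (m / k - 1) := by
      rw [Nat.odd_iff] at hModd; omega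
    rw [Nat.cast_div h2 (by norm_num), Nat.cast_sub hM1]
    push_cast
    ring
  rw [Nat.cast_sum, Finset.sum_congr rfl hterm, Finset.sum_sub_distrib]
  have hsum : ∑ k ∈ m.divisors, ((m / k : ℕ) : ℚ) / 2 = ((∑ d ∈ m.divisors, d : ℕ) : ℚ) / 2 := by
    rw [← Finset.sum_div]
    congr 1
    rw [← Nat.cast_sum]
    congr 1
    exact Nat.sum_div_divisors m (fun d => d)
  rw [hsum]
  simp [Finset.sum_const]
  ring
end

section
/- Let n ≡ 14 (mod 16). Then the number of partitions of n into two part sizes with λ1, λ2 both even and m1, m2 both odd (parity class EOEO) is even. -/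
/-- swap the odd part of the size with the (odd) multiplicity -/
def pflip (p : ℕ × ℕ) : ℕ × ℕ := (2 ^ (p.1.factorization 2) * p.2, ordCompl[2] p.1)

def rho (q : ℕ × ℕ × ℕ × ℕ) : ℕ × ℕ × ℕ × ℕ :=
  let p1 := pflip (q.1, q.2.1)
  let p2 := pflip (q.2.2.1, q.2.2.2)
  if p2.1 < p1.1 then (p1.1, p1.2, p2.1, p2.2) else (p2.1, p2.2, p1.1, p1.2)

lemma pflip_mul {a b : ℕ} :
    (pflip (a, b)).1 * (pflip (a, b)).2 = a * b := by
  have h := Nat.ordProj_mul_ordCompl_eq_self a 2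
  simp only [pflip]
  calc 2 ^ (a.factorization 2) * b * (ordCompl[2] a)
      = (2 ^ (a.factorization 2) * ordCompl[2] a) * b := by ring
    _ = a * b := by rw [h]

lemma pflip_even {a b : ℕ} (ha : Even a) (ha0 : a ≠ 0) :
    Even (pflip (a, b)).1 := by
  have hk : 0 < a.factorization 2 :=
    Nat.Prime.factorization_pos_of_dvd Nat.prime_two ha0 ha.two_dvd
  obtain ⟨j, hj⟩ := Nat.exists_eq_succ_of_ne_zero hk.ne'
  exact ⟨2 ^ j * b, by simp only [pflip]; rw [hj, pow_succ]; ring⟩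

lemma pflip_odd {a b : ℕ} (ha0 : a ≠ 0) : Odd (pflip (a, b)).2 := by
  have h := Nat.not_dvd_ordCompl Nat.prime_two ha0
  rw [Nat.odd_iff]
  rcases Nat.mod_two_eq_zero_or_one (pflip (a, b)).2 with h2 | h2
  · exact absurd (Nat.dvd_of_mod_eq_zero h2) h
  · exact h2

lemma pflip_pos1 {a b : ℕ} (hb : 1 ≤ b) : 1 ≤ (pflip (a, b)).1 := by
  simp only [pflip]
  exact Nat.one_le_iff_ne_zero.2 (by positivity)

lemma pflip_pos2 {a b : ℕ} (ha0 : a ≠ 0) : 1 ≤ (pflip (a, b)).2 :=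
  Nat.ordCompl_pos 2 ha0

lemma pflip_invol {a b : ℕ} (ha0 : a ≠ 0) (hb : Odd b) :
    pflip (pflip (a, b)) = (a, b) := by
  have hb0 : b ≠ 0 := by rcases hb with ⟨j, rfl⟩; omega
  have hb' : ¬ 2 ∣ b := Nat.two_dvd_ne_zero.mpr (Nat.odd_iff.1 hb)
  have hfac : ((2 ^ (a.factorization 2) * b).factorization) 2 = a.factorization 2 := by
    rw [Nat.factorization_mul (by positivity) hb0, Finsupp.add_apply,
      Nat.prime_two.factorization_pow, Finsupp.single_eq_same,
      Nat.factorization_eq_zero_of_not_dvd hb', add_zero]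
  have h := Nat.ordProj_mul_ordCompl_eq_self a 2
  simp only [pflip, hfac]
  rw [Nat.mul_div_cancel_left b (by positivity)]
  exact Prod.ext (by simpa using h) rfl

lemma even_card_of_invol {α : Type*} [DecidableEq α] (f : α → α) :
    ∀ s : Finset α, (∀ a ∈ s, f a ∈ s) → (∀ a ∈ s, f (f a) = a) →
      (∀ a ∈ s, f a ≠ a) → Even s.card := by
  intro s
  induction s using Finset.strongInduction with
  | _ s ih =>
    intro hmap hinv hne
    rcases s.eq_empty_or_nonempty with rfl | ⟨a, ha⟩
    · simp
    · have hfa := hmap a ha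
      have hne' := hne a ha
      set t : Finset α := s \ {a, f a} with ht
      have hsub : {a, f a} ⊆ s := by
        intro x hx
        simp only [Finset.mem_insert, Finset.mem_singleton] at hx
        rcases hx with rfl | rfl <;> assumption
      have hpair : ({a, f a} : Finset α).card = 2 := by
        rw [Finset.card_insert_of_notMem (by simp [Ne.symm hne']), Finset.card_singleton]
      have htss : t ⊂ s := by
        refine Finset.ssubset_iff_of_subset (Finset.sdiff_subset) |>.2 ⟨a, ha, ?_⟩
        simp [ht]
      have hcard : t.card = s.card - 2 := by
        rw [ht, Finset.card_sdiff_of_subset hsub, hpair]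
      have hmem : ∀ x ∈ t, x ∈ s ∧ x ≠ a ∧ x ≠ f a := by
        intro x hx
        simp only [ht, Finset.mem_sdiff, Finset.mem_insert, Finset.mem_singleton] at hx
        tauto
      have het : Even t.card := by
        refine ih t htss ?_ ?_ ?_
        · intro x hx
          obtain ⟨hxs, hxa, hxfa⟩ := hmem x hx
          rw [ht, Finset.mem_sdiff]
          refine ⟨hmap x hxs, ?_⟩
          simp only [Finset.mem_insert, Finset.mem_singleton]
          push_neg
          constructor
          · intro h; exact hxfa (by rw [← h, hinv x hxs])
          · intro h
            have h2 : f (f x) = f (f a) := by rw [h]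
            rw [hinv x hxs, hinv a ha] at h2
            exact hxa h2
        · intro x hx; exact hinv x (hmem x hx).1
        · intro x hx; exact hne x (hmem x hx).1
      have h2 : 2 ≤ s.card := by
        have := Finset.card_le_card hsub
        omega
      rcases het with ⟨k, hk⟩
      exact ⟨k + 1, by omega⟩

lemma sq_mod16 {k b : ℕ} (hk : 1 ≤ k) (hb : Odd b) :
    (2 ^ k * b ^ 2) % 16 = 0 ∨ (2 ^ k * b ^ 2) % 16 = 2 ∨
    (2 ^ k * b ^ 2) % 16 = 4 ∨ (2 ^ k * b ^ 2) % 16 = 8 := by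
  obtain ⟨j, rfl⟩ := hb
  obtain ⟨t, ht⟩ : Even (j * (j + 1)) := Nat.even_mul_succ_self j
  have hb2 : (2 * j + 1) ^ 2 = 8 * t + 1 := by nlinarith [ht]
  rcases Nat.lt_or_ge k 4 with h4 | h4
  · interval_cases k <;> rw [hb2] <;> omega
  · left
    obtain ⟨m, rfl⟩ : ∃ m, k = 4 + m := ⟨k - 4, by omega⟩
    have h16 : 2 ^ (4 + m) * (2 * j + 1) ^ 2 = 16 * (2 ^ m * (2 * j + 1) ^ 2) := by
      rw [pow_add]; ring
    omega

theorem EOEO_even (n : ℕ) (hn : n % 16 = 14) :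
    Even (Set.ncard {q ∈ TwoSize n |
      Even q.1 ∧ Odd q.2.1 ∧ Even q.2.2.1 ∧ Odd q.2.2.2}) := by
  set S : Set (ℕ × ℕ × ℕ × ℕ) := {q ∈ TwoSize n |
      Even q.1 ∧ Odd q.2.1 ∧ Even q.2.2.1 ∧ Odd q.2.2.2} with hS
  have hmem : ∀ q ∈ S, q.2.2.1 < q.1 ∧ 1 ≤ q.2.2.1 ∧ 1 ≤ q.2.1 ∧ 1 ≤ q.2.2.2 ∧
      q.1 * q.2.1 + q.2.2.1 * q.2.2.2 = n ∧ Even q.1 ∧ Odd q.2.1 ∧ Even q.2.2.1 ∧ Odd q.2.2.2 := by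
    rintro ⟨a, b, c, d⟩ ⟨⟨h1, h2, h3, h4, h5⟩, he⟩
    exact ⟨h1, h2, h3, h4, h5, he⟩
  have hfin : S.Finite := by
    apply Set.Finite.subset (Set.finite_Icc (0,0,0,0) (n,n,n,n))
    rintro ⟨a, b, c, d⟩ hq
    obtain ⟨h1, h2, h3, h4, h5, -⟩ := hmem _ hq
    simp only at h1 h2 h3 h4 h5
    simp only [Set.mem_Icc, Prod.mk_le_mk]
    refine ⟨⟨Nat.zero_le _, Nat.zero_le _, Nat.zero_le _, Nat.zero_le _⟩,
      ?_, ?_, ?_, ?_⟩ <;> nlinarith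
  rw [Set.ncard_eq_toFinset_card S hfin]
  apply even_card_of_invol rho
  · -- maps S to S
    rintro ⟨a, b, c, d⟩ hq
    rw [Set.Finite.mem_toFinset] at hq ⊢
    obtain ⟨h1, h2, h3, h4, h5, hea, hob, hec, hod⟩ := hmem _ hq
    simp only at h1 h2 h3 h4 h5 hea hob hec hod
    have ha0 : a ≠ 0 := by omega
    have hc0 : c ≠ 0 := by omega
    have hm1 : (pflip (a,b)).1 * (pflip (a,b)).2 = a * b := pflip_mul
    have hm2 : (pflip (c,d)).1 * (pflip (c,d)).2 = c * d := pflip_mul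
    have he1 : Even (pflip (a,b)).1 := pflip_even hea ha0
    have he2 : Even (pflip (c,d)).1 := pflip_even hec hc0
    have ho1 : Odd (pflip (a,b)).2 := pflip_odd ha0
    have ho2 : Odd (pflip (c,d)).2 := pflip_odd hc0
    have hpos11 : 1 ≤ (pflip (a,b)).1 := pflip_pos1 h3
    have hpos21 : 1 ≤ (pflip (c,d)).1 := pflip_pos1 h4
    have hpos12 : 1 ≤ (pflip (a,b)).2 := pflip_pos2 ha0
    have hpos22 : 1 ≤ (pflip (c,d)).2 := pflip_pos2 hc0
    have hneq : (pflip (a,b)).1 ≠ (pflip (c,d)).1 := by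
      intro h
      have hsum : (pflip (a,b)).1 * (pflip (a,b)).2 + (pflip (a,b)).1 * (pflip (c,d)).2 = n := by
        rw [hm1, h, hm2]; omega
      obtain ⟨u, hu⟩ := he1
      obtain ⟨v, hv⟩ := ho1
      obtain ⟨w, hw⟩ := ho2
      rw [hu, hv, hw] at hsum
      have : n = 4 * (u * (v + w + 1)) := by rw [← hsum]; ring
      omega
    show rho (a, b, c, d) ∈ S
    simp only [rho]
    split_ifs with hlt
    · refine ⟨⟨hlt, hpos21, hpos12, hpos22, ?_⟩, he1, ho1, he2, ho2⟩
      show (pflip (a,b)).1 * (pflip (a,b)).2 + (pflip (c,d)).1 * (pflip (c,d)).2 = n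
      rw [hm1, hm2]; omega
    · refine ⟨⟨lt_of_le_of_ne (not_lt.1 hlt) hneq, hpos11, hpos22, hpos12, ?_⟩, he2, ho2, he1, ho1⟩
      show (pflip (c,d)).1 * (pflip (c,d)).2 + (pflip (a,b)).1 * (pflip (a,b)).2 = n
      rw [hm2, hm1]; omega
  · -- involution
    rintro ⟨a, b, c, d⟩ hq
    rw [Set.Finite.mem_toFinset] at hq
    obtain ⟨h1, h2, h3, h4, h5, hea, hob, hec, hod⟩ := hmem _ hq
    simp only at h1 h2 h3 h4 hob hod
    have ha0 : a ≠ 0 := by omega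
    have hc0 : c ≠ 0 := by omega
    have hi1 : pflip (pflip (a, b)) = (a, b) := pflip_invol ha0 hob
    have hi2 : pflip (pflip (c, d)) = (c, d) := pflip_invol hc0 hod
    by_cases hlt : (pflip (c,d)).1 < (pflip (a,b)).1
    · have hr : rho (a,b,c,d) =
          ((pflip (a,b)).1, (pflip (a,b)).2, (pflip (c,d)).1, (pflip (c,d)).2) := by
        simp only [rho]; rw [if_pos hlt]
      rw [hr]
      simp only [rho, Prod.mk.eta, hi1, hi2]
      rw [if_pos h1]
    · have hr : rho (a,b,c,d) =
          ((pflip (c,d)).1, (pflip (c,d)).2, (pflip (a,b)).1, (pflip (a,b)).2) := by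
        simp only [rho]; rw [if_neg hlt]
      rw [hr]
      simp only [rho, Prod.mk.eta, hi1, hi2]
      rw [if_neg (by omega)]
  · -- no fixed points
    rintro ⟨a, b, c, d⟩ hq hfix
    rw [Set.Finite.mem_toFinset] at hq
    obtain ⟨h1, h2, h3, h4, h5, hea, hob, hec, hod⟩ := hmem _ hq
    simp only at h1 h2 h3 h4 h5 hea hob hec hod
    have ha0 : a ≠ 0 := by omega
    have hc0 : c ≠ 0 := by omega
    have hka : 1 ≤ a.factorization 2 :=
      Nat.Prime.factorization_pos_of_dvd Nat.prime_two ha0 hea.two_dvd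
    have hkc : 1 ≤ c.factorization 2 :=
      Nat.Prime.factorization_pos_of_dvd Nat.prime_two hc0 hec.two_dvd
    have hproj_a := Nat.ordProj_mul_ordCompl_eq_self a 2
    simp only [rho] at hfix
    split_ifs at hfix with hlt
    · have e1 : (pflip (a, b)).1 = a := congrArg Prod.fst hfix
      have e3 : (pflip (c, d)).1 = c := congrArg (fun q => q.2.2.1) hfix
      simp only [pflip] at e1 e3
      have hab : a * b = 2 ^ (a.factorization 2) * b ^ 2 := by
        conv_lhs => rw [← e1]
        ring
      have hcd : c * d = 2 ^ (c.factorization 2) * d ^ 2 := by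
        conv_lhs => rw [← e3]
        ring
      have r1 := sq_mod16 hka hob
      have r2 := sq_mod16 hkc hod
      rw [hab, hcd] at h5
      rcases r1 with r1 | r1 | r1 | r1 <;> rcases r2 with r2 | r2 | r2 | r2 <;> omega
    · have e3 : (pflip (a, b)).1 = c := congrArg (fun q => q.2.2.1) hfix
      have e4 : (pflip (a, b)).2 = d := congrArg (fun q => q.2.2.2) hfix
      simp only [pflip] at e3 e4
      have hha : a = 2 ^ (a.factorization 2) * d := by
        conv_rhs => rw [← e4]
        exact hproj_a.symm
      have hhc : c = 2 ^ (a.factorization 2) * b := e3.symm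
      have hsum : n = 2 ^ (a.factorization 2) * d * b + 2 ^ (a.factorization 2) * b * d := by
        rw [← hha, ← hhc]; omega
      obtain ⟨j, hj⟩ : ∃ j, a.factorization 2 = j + 1 := ⟨a.factorization 2 - 1, by omega⟩
      rw [hj, pow_succ] at hsum
      have : n = 4 * (2 ^ j * d * b) := by rw [hsum]; ring
      omega
end

section
/- Let n ≡ 14 (mod 16). Then the number of partitions λ1^{m1} λ2^{m2} of n into two part sizes with λ1, m2 odd and m1, λ2 even (parity class OEEO) is even; moreover the number of such partitions with λ1 m1 ≡ 2 (mod 4) equals the number with λ2 m2 ≡ 2 (mod 4). -/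
/-- The parity class `OEEO`: `λ1` odd, `m1` even, `λ2` even, `m2` odd. -/
def OEEO (n : ℕ) : Set (ℕ × ℕ × ℕ × ℕ) :=
  {q ∈ TwoSize n | Odd q.1 ∧ Even q.2.1 ∧ Even q.2.2.1 ∧ Odd q.2.2.2}

private lemma odd_mul_even_mod4 {a b : ℕ} (ha : Odd a) (hb : Even b) :
    a * b % 4 = b % 4 := by
  obtain ⟨k, hk⟩ := ha
  obtain ⟨j, hj⟩ := hb
  have h : a * b = 4 * (k * j) + b := by subst hk hj; ring
  omega

/-- Conjugation on two-part-size partitions. -/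
private def conj (q : ℕ × ℕ × ℕ × ℕ) : ℕ × ℕ × ℕ × ℕ :=
  (q.2.1 + q.2.2.2, q.2.2.1, q.2.1, q.1 - q.2.2.1)

private lemma conj_mem {n : ℕ} {q : ℕ × ℕ × ℕ × ℕ} (hq : q ∈ OEEO n) :
    conj q ∈ OEEO n := by
  obtain ⟨⟨h1, h2, h3, h4, h5⟩, ho1, he1, he2, ho2⟩ := hq
  obtain ⟨l1, m1, l2, m2⟩ := q
  simp only at *
  refine ⟨⟨?_, ?_, ?_, ?_, ?_⟩, ?_, he2, he1, ?_⟩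
  · simp only [conj]; omega
  · simpa [conj] using h3
  · simpa [conj] using h2
  · simp only [conj]; omega
  · simp only [conj]
    have hd : l2 + (l1 - l2) = l1 := by omega
    calc (m1 + m2) * l2 + m1 * (l1 - l2)
        = (l2 + (l1 - l2)) * m1 + l2 * m2 := by ring
      _ = n := by rw [hd]; exact h5
  · simp only [conj]; exact he1.add_odd ho2
  · simp only [conj]; exact Nat.Odd.sub_even h1.le ho1 he2

private lemma conj_conj {n : ℕ} {q : ℕ × ℕ × ℕ × ℕ} (hq : q ∈ OEEO n) :
    conj (conj q) = q := by
  obtain ⟨⟨h1, h2, h3, h4, h5⟩, _⟩ := hq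
  obtain ⟨l1, m1, l2, m2⟩ := q
  simp only at *
  simp only [conj, Prod.mk.injEq]
  exact ⟨by omega, trivial, trivial, by omega⟩

/-- key mod-4 data for a member of `OEEO n` with `n ≡ 2 (mod 4)`. -/
private lemma mods {n : ℕ} (hn : n % 4 = 2) {q : ℕ × ℕ × ℕ × ℕ} (hq : q ∈ OEEO n) :
    q.1 * q.2.1 % 4 = q.2.1 % 4 ∧ q.2.2.1 * q.2.2.2 % 4 = q.2.2.1 % 4 ∧
    q.2.1 % 2 = 0 ∧ q.2.2.1 % 2 = 0 ∧ (q.2.1 % 4 + q.2.2.1 % 4) % 4 = 2 := by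
  obtain ⟨⟨h1, h2, h3, h4, h5⟩, ho1, he1, he2, ho2⟩ := hq
  have e1 : q.1 * q.2.1 % 4 = q.2.1 % 4 := odd_mul_even_mod4 ho1 he1
  have e2 : q.2.2.1 * q.2.2.2 % 4 = q.2.2.1 % 4 := by
    rw [mul_comm]; exact odd_mul_even_mod4 ho2 he2
  refine ⟨e1, e2, Nat.even_iff.mp he1, Nat.even_iff.mp he2, ?_⟩
  have hsum : (q.1 * q.2.1 + q.2.2.1 * q.2.2.2) % 4 = 2 := by rw [h5]; exact hn
  omega

theorem OEEO_even_and_balanced (n : ℕ) (hn : n % 16 = 14) :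
    Even (Set.ncard (OEEO n)) ∧
    Set.ncard {q ∈ OEEO n | q.1 * q.2.1 % 4 = 2} =
      Set.ncard {q ∈ OEEO n | q.2.2.1 * q.2.2.2 % 4 = 2} := by
  have hn4 : n % 4 = 2 := by omega
  set A := {q ∈ OEEO n | q.1 * q.2.1 % 4 = 2} with hA_def
  set B := {q ∈ OEEO n | q.2.2.1 * q.2.2.2 % 4 = 2} with hB_def
  -- conjugation sends A into B and B into A
  have hAtoB : ∀ q ∈ A, conj q ∈ B := by
    intro q ⟨hq, hq2⟩
    refine ⟨conj_mem hq, ?_⟩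
    obtain ⟨e1, e2, _, _, _⟩ := mods hn4 hq
    obtain ⟨e1', e2', _, _, _⟩ := mods hn4 (conj_mem hq)
    have : (conj q).2.2.1 = q.2.1 := rfl
    omega
  have hBtoA : ∀ q ∈ B, conj q ∈ A := by
    intro q ⟨hq, hq2⟩
    refine ⟨conj_mem hq, ?_⟩
    obtain ⟨e1, e2, _, _, _⟩ := mods hn4 hq
    obtain ⟨e1', e2', _, _, _⟩ := mods hn4 (conj_mem hq)
    have : (conj q).2.1 = q.2.2.1 := rfl
    omega
  -- image and injectivity
  have himg : conj '' A = B := by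
    apply Set.Subset.antisymm
    · rintro _ ⟨q, hq, rfl⟩; exact hAtoB q hq
    · intro q hq
      exact ⟨conj q, hBtoA q hq, conj_conj hq.1⟩
  have hinj : Set.InjOn conj A := by
    intro a ha b hb hab
    have := conj_conj ha.1
    have := conj_conj hb.1
    rw [← conj_conj ha.1, ← conj_conj hb.1, hab]
  have hcard : A.ncard = B.ncard := by
    rw [← himg, Set.ncard_image_of_injOn hinj]
  -- finiteness
  have hfin : (OEEO n).Finite := by
    apply Set.Finite.subset (Set.finite_Iic (n, n, n, n))
    rintro ⟨l1, m1, l2, m2⟩ ⟨⟨h1, h2, h3, h4, h5⟩, _⟩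
    simp only [Set.mem_Iic, Prod.mk_le_mk]
    simp only at h1 h2 h3 h4 h5
    have hb1 : l1 * 1 ≤ l1 * m1 := Nat.mul_le_mul_left _ h3
    have hb2 : 1 * m1 ≤ l1 * m1 := Nat.mul_le_mul_right _ (by omega)
    have hb3 : l2 * 1 ≤ l2 * m2 := Nat.mul_le_mul_left _ h4
    have hb4 : 1 * m2 ≤ l2 * m2 := Nat.mul_le_mul_right _ h2
    refine ⟨by omega, by omega, by omega, by omega⟩
  have hAfin : A.Finite := hfin.subset (fun q hq => hq.1)
  have hBfin : B.Finite := hfin.subset (fun q hq => hq.1)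
  -- OEEO n is the disjoint union of A and B
  have hcover : OEEO n = A ∪ B := by
    ext q
    constructor
    · intro hq
      obtain ⟨e1, e2, p1, p2, p3⟩ := mods hn4 hq
      by_cases h : q.1 * q.2.1 % 4 = 2
      · exact Or.inl ⟨hq, h⟩
      · exact Or.inr ⟨hq, by omega⟩
    · rintro (⟨hq, _⟩ | ⟨hq, _⟩) <;> exact hq
  have hdisj : Disjoint A B := by
    rw [Set.disjoint_left]
    rintro q ⟨hq, h1⟩ ⟨_, h2⟩
    obtain ⟨e1, e2, p1, p2, p3⟩ := mods hn4 hq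
    omega
  refine ⟨?_, hcard⟩
  rw [hcover, Set.ncard_union_eq hdisj hAfin hBfin, hcard]
  exact ⟨B.ncard, by ring⟩
end
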